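/- Let A be an almost Kähler–Poisson algebra with tangent space X(A), covariant derivative ∇ and bilinear form (X,Y) = X^i Y_i. Then ∇ is a metric connection: ∇_X(Y,Z) − (∇_X Y, Z) − (Y, ∇_X Z) = 0 for all X, Y, Z ∈ X(A). -/
import Mathlib


open scoped BigOperators

namespace KPA

/-- The field of fractions of the polynomial ring `ℂ[x¹,…,xᵐ]`. -/
abbrev A (m : ℕ) := FractionRing (MvPolynomial (Fin m) ℂ)

/-- The generators `x^i` of `A m`. -/
noncomputable def Xg {m : ℕ} (i : Fin m) : A m :=
  algebraMap (MvPolynomial (Fin m) ℂ) (A m) (MvPolynomial.X i)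

/-- The image of a complex constant in `A m`. -/
noncomputable def cC {m : ℕ} (z : ℂ) : A m :=
  algebraMap (MvPolynomial (Fin m) ℂ) (A m) (MvPolynomial.C z)

/-- An almost Kähler–Poisson algebra: the field of fractions `A m` of `ℂ[x¹,…,xᵐ]`,
equipped with a ∗-structure `st` fixing the generators, a Poisson bracket `br`
compatible with ∗, and an invertible hermitian element `γ2` such that
`P^i_k P^k_l P^l_j = -γ² P^i_j` where `P^{ij} = {x^i, x^j}`. -/
structure AKP (m : ℕ) where
  br : A m → A m → A m
  st : A m → A m
  br_add_left : ∀ a b c, br (a + b) c = br a c + br b c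
  br_antisymm : ∀ a b, br a b = - br b a
  br_leibniz : ∀ a b c, br a (b * c) = br a b * c + b * br a c
  br_jacobi : ∀ a b c, br a (br b c) + br b (br c a) + br c (br a b) = 0
  br_const : ∀ (z : ℂ) (a : A m), br (cC z) a = 0
  st_add : ∀ a b, st (a + b) = st a + st b
  st_mul : ∀ a b, st (a * b) = st a * st b
  st_invol : ∀ a, st (st a) = a
  st_const : ∀ z : ℂ, st (cC z) = cC (starRingEnd ℂ z)
  st_x : ∀ i, st (Xg i) = Xg i
  st_br : ∀ a b, st (br a b) = br (st a) (st b)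
  γ2 : A m
  γ2_ne : γ2 ≠ 0
  γ2_herm : st γ2 = γ2
  akp : ∀ i j, (∑ k, ∑ l, br (Xg i) (Xg k) * br (Xg k) (Xg l) * br (Xg l) (Xg j))
      = - γ2 * br (Xg i) (Xg j)

namespace AKP

variable {m : ℕ} (S : AKP m)

/-- `P^{ij} = {x^i, x^j}`. -/
noncomputable def P (i j : Fin m) : A m := S.br (Xg i) (Xg j)

/-- `D^i(u) = γ^{-2} {u, x^k} P^i_k`. -/
noncomputable def D (u : A m) (i : Fin m) : A m := S.γ2⁻¹ * ∑ k, S.br u (Xg k) * S.P i k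

/-- `D^{ik} = D^i(x^k)`. -/
noncomputable def Dm (i k : Fin m) : A m := S.D (Xg k) i

/-- Membership in the tangent space `X(A) = {D(X) : X ∈ Der(A)}` (in components). -/
def tang (T : Fin m → A m) : Prop := ∃ V : Fin m → A m, ∀ i, T i = ∑ k, S.Dm i k * V k

/-- The tangent space `X(A)` as a submodule of `A^m` : the range of the projection `D`. -/
noncomputable def tSp : Submodule (A m) (Fin m → A m) :=
  LinearMap.range (Matrix.mulVecLin (Matrix.of fun i k => S.Dm i k))

/-- Action `X(u) = X^i D_i(u)` of a tangent vector on an element. -/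
noncomputable def act (X : Fin m → A m) (u : A m) : A m := ∑ i, X i * S.D u i

/-- The covariant derivative `∇_X Y = D^{ik} X^l D_l(Y_k) ∂_i` (in components). -/
noncomputable def nab (X Y : Fin m → A m) (i : Fin m) : A m :=
  ∑ k, S.Dm i k * ∑ l, X l * S.D (Y k) l

/-- The commutator `[X,Y]^i = X(Y^i) - Y(X^i)`. -/
noncomputable def lie (X Y : Fin m → A m) (i : Fin m) : A m := S.act X (Y i) - S.act Y (X i)

/-- The curvature `R(X,Y)Z = ∇_X ∇_Y Z - ∇_Y ∇_X Z - ∇_{[X,Y]} Z`. -/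
noncomputable def curv (X Y Z : Fin m → A m) (i : Fin m) : A m :=
  S.nab X (S.nab Y Z) i - S.nab Y (S.nab X Z) i - S.nab (S.lie X Y) Z i

/-- The bilinear form `(X,Y) = X^i Y_i`. -/
noncomputable def ipa (_S : AKP m) (X Y : Fin m → A m) : A m := ∑ i, X i * Y i

/-- `R(X,Y,Z,V) = (R(Z,V)Y, X)`. -/
noncomputable def Rq (X Y Z V : Fin m → A m) : A m := S.ipa (S.curv Z V Y) X

/-- `(∇_X R)(Y,Z,V)`, the covariant derivative of the curvature tensor. -/
noncomputable def nabR (X Y Z V : Fin m → A m) (i : Fin m) : A m :=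
  S.nab X (S.curv Y Z V) i - S.curv (S.nab X Y) Z V i
    - S.curv Y (S.nab X Z) V i - S.curv Y Z (S.nab X V) i

/-- `Π^{ij} = δ^{ij} - D^{ij}`. -/
noncomputable def Pim (i j : Fin m) : A m := (if i = j then 1 else 0) - S.Dm i j

/-- The positivity preorder: `a ≥ 0` iff `a = (∑ uᵢ* uᵢ)/(∑ vₖ* vₖ)`. -/
def pos (a : A m) : Prop :=
  ∃ (N N' : ℕ) (u : Fin N → A m) (v : Fin N' → A m),
    a = (∑ i, S.st (u i) * u i) / (∑ k, S.st (v k) * v k)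

lemma P_anti (i j : Fin m) : S.P i j = - S.P j i := S.br_antisymm _ _

lemma Dm_eq (i k : Fin m) : S.Dm i k = S.γ2⁻¹ * ∑ l, S.P k l * S.P i l := rfl

lemma Dm_symm (i k : Fin m) : S.Dm i k = S.Dm k i := by
  rw [Dm_eq, Dm_eq]
  congr 1
  exact Finset.sum_congr rfl fun l _ => mul_comm _ _

lemma br_zero_left (w : A m) : S.br 0 w = 0 := by
  have h := S.br_add_left 0 0 w
  simpa using h.symm

lemma br_mul_left (u v w : A m) :
    S.br (u * v) w = S.br u w * v + u * S.br v w := by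
  rw [S.br_antisymm (u * v) w, S.br_leibniz, S.br_antisymm w u, S.br_antisymm w v]
  ring

lemma D_add (u v : A m) (i : Fin m) : S.D (u + v) i = S.D u i + S.D v i := by
  simp [D, S.br_add_left, add_mul, Finset.sum_add_distrib, mul_add]

lemma D_zero (i : Fin m) : S.D 0 i = 0 := by
  simp [D, S.br_zero_left]

lemma D_mul (u v : A m) (i : Fin m) :
    S.D (u * v) i = S.D u i * v + u * S.D v i := by
  simp only [D, Finset.mul_sum]
  rw [Finset.sum_mul, ← Finset.sum_add_distrib]
  exact Finset.sum_congr rfl fun k _ => by rw [S.br_mul_left]; ring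

lemma D_sum {ι : Type*} (s : Finset ι) (f : ι → A m) (i : Fin m) :
    S.D (∑ j ∈ s, f j) i = ∑ j ∈ s, S.D (f j) i := by
  classical
  induction s using Finset.cons_induction with
  | empty => simp [S.D_zero]
  | cons a s ha ih => rw [Finset.sum_cons, Finset.sum_cons, S.D_add, ih]

lemma Dm_proj (i k : Fin m) : ∑ j, S.Dm i j * S.Dm j k = S.Dm i k := by
  have key : ∀ l : Fin m,
      ∑ j, ∑ s, S.P l j * (S.P j s * S.P s k) = -(S.γ2 * S.P l k) := by
    intro l
    have h := S.akp l k
    calc ∑ j, ∑ s, S.P l j * (S.P j s * S.P s k)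
        = ∑ j, ∑ s, S.br (Xg l) (Xg j) * S.br (Xg j) (Xg s) * S.br (Xg s) (Xg k) := by
          simp only [P, mul_assoc]
      _ = - S.γ2 * S.br (Xg l) (Xg k) := h
      _ = -(S.γ2 * S.P l k) := by rw [P]; ring
  have expand : ∀ j : Fin m, S.Dm i j * S.Dm j k
      = ∑ l, ∑ s, S.γ2⁻¹ * S.γ2⁻¹ * (S.P i l * (S.P l j * (S.P j s * S.P s k))) := by
    intro j
    rw [Dm_eq, Dm_eq, Finset.mul_sum, Finset.mul_sum, Finset.sum_mul]
    refine Finset.sum_congr rfl fun l _ => ?_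
    rw [Finset.mul_sum]
    refine Finset.sum_congr rfl fun s _ => ?_
    rw [S.P_anti j l, S.P_anti k s]
    ring
  have hγ : S.γ2 ≠ 0 := S.γ2_ne
  calc ∑ j, S.Dm i j * S.Dm j k
      = ∑ j, ∑ l, ∑ s, S.γ2⁻¹ * S.γ2⁻¹ * (S.P i l * (S.P l j * (S.P j s * S.P s k))) :=
        Finset.sum_congr rfl fun j _ => expand j
    _ = ∑ l, ∑ j, ∑ s, S.γ2⁻¹ * S.γ2⁻¹ * (S.P i l * (S.P l j * (S.P j s * S.P s k))) :=
        Finset.sum_comm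
    _ = ∑ l, S.γ2⁻¹ * S.γ2⁻¹ * (S.P i l * ∑ j, ∑ s, S.P l j * (S.P j s * S.P s k)) := by
        refine Finset.sum_congr rfl fun l _ => ?_
        simp [Finset.mul_sum]
    _ = ∑ l, S.γ2⁻¹ * (S.P k l * S.P i l) := by
        refine Finset.sum_congr rfl fun l _ => ?_
        rw [key l, S.P_anti k l]
        have hinv : S.γ2⁻¹ * S.γ2 = 1 := inv_mul_cancel₀ hγ
        linear_combination (-(S.γ2⁻¹ * S.P i l * S.P l k)) * hinv
    _ = S.Dm i k := by rw [Dm_eq, Finset.mul_sum]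

lemma tang_fix {T : Fin m → A m} (hT : S.tang T) (k : Fin m) :
    ∑ i, S.Dm i k * T i = T k := by
  obtain ⟨V, hV⟩ := hT
  calc ∑ i, S.Dm i k * T i
      = ∑ i, ∑ j, S.Dm k i * (S.Dm i j * V j) := by
        refine Finset.sum_congr rfl fun i _ => ?_
        rw [hV i, S.Dm_symm i k, Finset.mul_sum]
    _ = ∑ j, (∑ i, S.Dm k i * S.Dm i j) * V j := by
        rw [Finset.sum_comm]
        exact Finset.sum_congr rfl fun j _ => by rw [Finset.sum_mul]; simp [mul_assoc]
    _ = ∑ j, S.Dm k j * V j := by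
        refine Finset.sum_congr rfl fun j _ => ?_
        rw [S.Dm_proj k j]
    _ = T k := (hV k).symm

end AKP
end KPA

/-- The covariant derivative of an almost Kähler–Poisson algebra is a
metric connection: `∇_X(Y,Z) − (∇_X Y, Z) − (Y, ∇_X Z) = 0` for all `X,Y,Z ∈ X(A)`. -/
theorem statement_14 {m : ℕ} (S : KPA.AKP m) (X Y Z : Fin m → KPA.A m)
    (hX : S.tang X) (hY : S.tang Y) (hZ : S.tang Z) :
    S.act X (S.ipa Y Z) - S.ipa (S.nab X Y) Z - S.ipa Y (S.nab X Z) = 0 := by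
  have h0 : S.act X (S.ipa Y Z)
      = ∑ l, X l * (∑ k, S.D (Y k) l * Z k + ∑ k, Y k * S.D (Z k) l) := by
    unfold KPA.AKP.act KPA.AKP.ipa
    refine Finset.sum_congr rfl fun l _ => ?_
    congr 1
    rw [S.D_sum, ← Finset.sum_add_distrib]
    exact Finset.sum_congr rfl fun k _ => S.D_mul _ _ _
  have h1 : S.ipa (S.nab X Y) Z = ∑ l, X l * ∑ k, S.D (Y k) l * Z k := by
    unfold KPA.AKP.ipa KPA.AKP.nab
    calc ∑ i, (∑ k, S.Dm i k * ∑ l, X l * S.D (Y k) l) * Z i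
        = ∑ i, ∑ k, (∑ l, X l * S.D (Y k) l) * (S.Dm i k * Z i) := by
          refine Finset.sum_congr rfl fun i _ => ?_
          rw [Finset.sum_mul]
          exact Finset.sum_congr rfl fun k _ => by ring
      _ = ∑ k, (∑ l, X l * S.D (Y k) l) * (∑ i, S.Dm i k * Z i) := by
          rw [Finset.sum_comm]
          exact Finset.sum_congr rfl fun k _ => by rw [Finset.mul_sum]
      _ = ∑ k, ∑ l, X l * (S.D (Y k) l * Z k) := by
          refine Finset.sum_congr rfl fun k _ => ?_
          rw [S.tang_fix hZ k, Finset.sum_mul]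
          exact Finset.sum_congr rfl fun l _ => by ring
      _ = ∑ l, X l * ∑ k, S.D (Y k) l * Z k := by
          rw [Finset.sum_comm]
          exact Finset.sum_congr rfl fun l _ => by rw [Finset.mul_sum]
  have h2 : S.ipa Y (S.nab X Z) = ∑ l, X l * ∑ k, Y k * S.D (Z k) l := by
    unfold KPA.AKP.ipa KPA.AKP.nab
    calc ∑ i, Y i * ∑ k, S.Dm i k * ∑ l, X l * S.D (Z k) l
        = ∑ i, ∑ k, (∑ l, X l * S.D (Z k) l) * (S.Dm i k * Y i) := by
          refine Finset.sum_congr rfl fun i _ => ?_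
          rw [Finset.mul_sum]
          exact Finset.sum_congr rfl fun k _ => by ring
      _ = ∑ k, (∑ l, X l * S.D (Z k) l) * (∑ i, S.Dm i k * Y i) := by
          rw [Finset.sum_comm]
          exact Finset.sum_congr rfl fun k _ => by rw [Finset.mul_sum]
      _ = ∑ k, ∑ l, X l * (Y k * S.D (Z k) l) := by
          refine Finset.sum_congr rfl fun k _ => ?_
          rw [S.tang_fix hY k, Finset.sum_mul]
          exact Finset.sum_congr rfl fun l _ => by ring
      _ = ∑ l, X l * ∑ k, Y k * S.D (Z k) l := by
          rw [Finset.sum_comm]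
          exact Finset.sum_congr rfl fun l _ => by rw [Finset.mul_sum]
  rw [h0, h1, h2]
  simp [mul_add, Finset.sum_add_distrib]
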